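/- Let J ⊂ ℕ be a set of positive integers of density zero, i.e. lim_{n→∞} (1/n)·#{k ≤ n : k ∈ J} = 0, and let (a_k)_{k≥1} be any sequence of 0's and 1's. Then the set E(J, (a_k)) = {x ∈ (0,1] : ε_k(x) = a_k for all k ∈ J} has Hausdorff dimension 1. -/

import Mathlib

open Filter Set MeasureTheory
open scoped ENNReal NNReal Classical

/-- The doubling map on `(0,1]`. -/
noncomputable def T (x : ℝ) : ℝ := 2 * x - ⌈2 * x⌉ + 1

/-- The Saint-Petersburg potential: `phi x = 2^k` for `x ∈ (2^{-k-1}, 2^{-k}]`. -/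
noncomputable def phi (x : ℝ) : ℝ := 2 ^ ⌊Real.logb 2 x⁻¹⌋

/-- Birkhoff sums of the Saint-Petersburg potential under the doubling map. -/
noncomputable def S (n : ℕ) (x : ℝ) : ℝ := ∑ j ∈ Finset.range n, phi (T^[j] x)

/-- The `n`-th binary digit of `x` (for `n ≥ 1`): `eps n x = ⌈2 T^{n-1} x⌉ - 1`. -/
noncomputable def eps (n : ℕ) (x : ℝ) : ℤ := ⌈2 * T^[n-1] x⌉ - 1


lemma T_mem {x : ℝ} (hx : x ∈ Set.Ioc (0:ℝ) 1) : T x ∈ Set.Ioc (0:ℝ) 1 := by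
  obtain ⟨h0, h1⟩ := hx
  constructor
  · have := Int.ceil_lt_add_one (2*x); unfold T; linarith
  · have := Int.le_ceil (2*x); unfold T; linarith

lemma T_iter_mem {x : ℝ} (hx : x ∈ Set.Ioc (0:ℝ) 1) (n : ℕ) : T^[n] x ∈ Set.Ioc (0:ℝ) 1 := by
  induction n with
  | zero => exact hx
  | succ n ih => rw [Function.iterate_succ_apply']; exact T_mem ih

lemma eps_one (x : ℝ) : eps 1 x = ⌈2*x⌉ - 1 := by simp [eps]

lemma eps_succ (k : ℕ) (hk : 1 ≤ k) (x : ℝ) : eps (k+1) x = eps k (T x) := by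
  unfold eps
  rw [show k+1-1 = (k-1)+1 by omega, Function.iterate_succ_apply]

lemma eps_mem {x : ℝ} (hx : x ∈ Set.Ioc (0:ℝ) 1) (k : ℕ) : eps k x = 0 ∨ eps k x = 1 := by
  have h := T_iter_mem hx (k-1)
  unfold eps
  have h1 : (0:ℝ) < 2 * T^[k-1] x := by linarith [h.1]
  have h2 : 2 * T^[k-1] x ≤ 2 := by linarith [h.2]
  have c1 : (0:ℤ) < ⌈2 * T^[k-1] x⌉ := Int.ceil_pos.2 h1
  have c2 : ⌈2 * T^[k-1] x⌉ ≤ 2 := by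
    have : ((2:ℤ):ℝ) = 2 := by norm_num
    exact Int.ceil_le.2 (by rw [this]; exact h2)
  omega

lemma two_mul_eq {x : ℝ} : T x = 2 * x - eps 1 x := by
  rw [eps_one]; unfold T; push_cast; ring

lemma expansion {x : ℝ} (n : ℕ) :
    x = ∑ k ∈ Finset.range n, (eps (k+1) x : ℝ)/2^(k+1) + T^[n] x / 2^n := by
  induction n with
  | zero => simp
  | succ n ih =>
    rw [Finset.sum_range_succ, Function.iterate_succ_apply']
    have hT : T (T^[n] x) = 2 * T^[n] x - eps 1 (T^[n] x) := two_mul_eq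
    have he : eps (n+1) x = eps 1 (T^[n] x) := by
      unfold eps; simp
    rw [hT, he]
    have hp : (2:ℝ)^(n+1) = 2^n*2 := pow_succ 2 n
    have hpos : (0:ℝ) < 2^n := by positivity
    field_simp
    field_simp at ih
    rw [hp]
    nlinarith [ih]


def Bin (c : ℕ → ℤ) : Prop := ∀ k, c k = 0 ∨ c k = 1
def Inf1 (c : ℕ → ℤ) : Prop := ∀ N, ∃ k, N ≤ k ∧ c k = 1

noncomputable def val (c : ℕ → ℤ) : ℝ := ∑' k : ℕ, (c (k+1) : ℝ)/2^(k+1)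

lemma half_pow_summable : Summable (fun k : ℕ => (1/2:ℝ)^(k+1)) :=
  (summable_geometric_two.mul_left (1/2:ℝ)).congr (fun k => (pow_succ' (1/2:ℝ) k).symm)

lemma val_term_nonneg {c : ℕ → ℤ} (hc : Bin c) (k : ℕ) : 0 ≤ (c (k+1) : ℝ)/2^(k+1) := by
  rcases hc (k+1) with h | h <;> rw [h] <;> positivity

lemma val_term_le {c : ℕ → ℤ} (hc : Bin c) (k : ℕ) : (c (k+1) : ℝ)/2^(k+1) ≤ (1/2)^(k+1) := by
  rcases hc (k+1) with h | h <;> rw [h] <;> simp [div_pow]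

lemma summable_val {c : ℕ → ℤ} (hc : Bin c) : Summable (fun k : ℕ => (c (k+1) : ℝ)/2^(k+1)) :=
  Summable.of_nonneg_of_le (val_term_nonneg hc) (val_term_le hc) half_pow_summable

lemma tsum_half_pow : ∑' k : ℕ, (1/2:ℝ)^(k+1) = 1 := by
  have h2 : ∑' k : ℕ, (1/2:ℝ)^k = 2 := tsum_geometric_two
  have h3 := Summable.tsum_eq_zero_add (f := fun k : ℕ => (1/2:ℝ)^k) summable_geometric_two
  rw [h2] at h3
  simp only [pow_zero] at h3
  linarith [h3]

lemma val_nonneg {c : ℕ → ℤ} (hc : Bin c) : 0 ≤ val c :=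
  tsum_nonneg (val_term_nonneg hc)

lemma val_le_one {c : ℕ → ℤ} (hc : Bin c) : val c ≤ 1 := by
  calc val c ≤ ∑' k : ℕ, (1/2:ℝ)^(k+1) :=
        Summable.tsum_le_tsum (val_term_le hc) (summable_val hc) half_pow_summable
    _ = 1 := tsum_half_pow

lemma val_pos {c : ℕ → ℤ} (hc : Bin c) {k : ℕ} (hk : 1 ≤ k) (h1 : c k = 1) : 0 < val c := by
  have hle : (c ((k-1)+1) : ℝ)/2^((k-1)+1) ≤ val c :=
    Summable.le_tsum (summable_val hc) (k-1) (fun j _ => val_term_nonneg hc j)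
  have hk1 : k - 1 + 1 = k := by omega
  rw [hk1, h1] at hle
  have : (0:ℝ) < 1/2^k := by positivity
  push_cast at hle
  linarith

lemma val_mem {c : ℕ → ℤ} (hc : Bin c) (h : Inf1 c) : val c ∈ Set.Ioc (0:ℝ) 1 := by
  obtain ⟨k, hk1, hk⟩ := h 1
  exact ⟨val_pos hc hk1 hk, val_le_one hc⟩

lemma val_shift {c : ℕ → ℤ} (hc : Bin c) :
    val c = (c 1 : ℝ)/2 + (val (fun k => c (k+1)))/2 := by
  have hs := summable_val hc
  have h0 := Summable.tsum_eq_zero_add hs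
  have hsh : Bin (fun k => c (k+1)) := fun k => hc (k+1)
  have h2 : ∑' k : ℕ, (c (k+1+1) : ℝ)/2^(k+1+1) = (val (fun k => c (k+1)))/2 := by
    rw [val, ← tsum_div_const]
    congr 1 with k
    rw [pow_succ]
    ring
  rw [val, h0, h2]
  norm_num

lemma val_split {c : ℕ → ℤ} (hc : Bin c) (p : ℕ) :
    val c = ∑ k ∈ Finset.range p, (c (k+1) : ℝ)/2^(k+1) + (1/2)^p * val (fun k => c (k+p)) := by
  induction p generalizing c with
  | zero => simp
  | succ p ih =>
    have hsh : Bin (fun k => c (k+1)) := fun k => hc (k+1)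
    have h1 := val_shift hc
    rw [ih hsh] at h1
    rw [h1, Finset.sum_range_succ']
    have : (fun k => (fun j => c (j+1)) (k+p)) = (fun k => c (k+(p+1))) := by
      funext k; rfl
    rw [this]
    have hsum : ∑ k ∈ Finset.range p, (c (k+1+1) : ℝ)/2^(k+1+1)
        = (∑ k ∈ Finset.range p, (c (k+1+1) : ℝ)/2^(k+1))/2 := by
      rw [Finset.sum_div]
      apply Finset.sum_congr rfl
      intro k _
      rw [pow_succ]
      ring
    rw [hsum]
    ring


variable {c : ℕ → ℤ} {x y : ℝ}

lemma Bin.shift (hc : Bin c) : Bin (fun k => c (k+1)) := fun k => hc (k+1)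

lemma Inf1.shift (h : Inf1 c) : Inf1 (fun k => c (k+1)) := by
  intro N
  obtain ⟨k, hk1, hk⟩ := h (N+1)
  exact ⟨k-1, by omega, by simp only []; rw [show k-1+1 = k by omega]; exact hk⟩

lemma T_val (hc : Bin c) (h : Inf1 c) :
    T (val c) = val (fun k => c (k+1)) ∧ eps 1 (val c) = c 1 := by
  have hr := val_mem hc.shift h.shift
  set r := val (fun k => c (k+1)) with hrdef
  have h2 : 2 * val c = (c 1 : ℝ) + r := by rw [val_shift hc]; ring
  have hceilr : ⌈r⌉ = 1 := by
    have hp : (0:ℤ) < ⌈r⌉ := Int.ceil_pos.2 hr.1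
    have hle : ⌈r⌉ ≤ 1 := Int.ceil_le.2 (by norm_num; exact hr.2)
    omega
  have hceil : ⌈2 * val c⌉ = c 1 + 1 := by
    rw [h2, add_comm, Int.ceil_add_intCast, hceilr]
    ring
  constructor
  · rw [two_mul_eq, eps_one, hceil]
    push_cast
    linarith [h2]
  · rw [eps_one, hceil]
    ring

lemma eps_val_aux : ∀ k, ∀ c : ℕ → ℤ, Bin c → Inf1 c → eps (k+1) (val c) = c (k+1) := by
  intro k
  induction k with
  | zero => intro c hc h; exact (T_val hc h).2
  | succ k ih =>
    intro c hc h
    rw [eps_succ (k+1) (by omega), (T_val hc h).1]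
    exact ih _ hc.shift h.shift

lemma eps_val (hc : Bin c) (h : Inf1 c) (k : ℕ) (hk : 1 ≤ k) : eps k (val c) = c k := by
  have := eps_val_aux (k-1) c hc h
  rwa [show k-1+1 = k by omega] at this

lemma eps_shift (k i : ℕ) (hk : 1 ≤ k) : ∀ x : ℝ, eps k (T^[i] x) = eps (k+i) x := by
  induction i with
  | zero => intro x; simp
  | succ i ih =>
    intro x
    rw [Function.iterate_succ_apply, ih (T x), show k+(i+1) = (k+i)+1 by ring,
      eps_succ (k+i) (by omega)]

lemma eps_inf1 (hx : x ∈ Set.Ioc (0:ℝ) 1) : Inf1 (fun k => eps k x) := by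
  intro N
  by_contra hcon
  push_neg at hcon
  have h0 : ∀ k, N ≤ k → 1 ≤ k → eps k x = 0 := fun k h1 h2 =>
    (eps_mem hx k).resolve_right (hcon k h1)
  set y := T^[N] x with hy'
  have hy : y ∈ Set.Ioc (0:ℝ) 1 := T_iter_mem hx N
  have hdig : ∀ j, T^[j] y = 2^j * y := by
    intro j
    induction j with
    | zero => simp
    | succ j ih =>
      have he : eps 1 (T^[j] y) = 0 := by
        rw [eps_shift 1 j (by omega), hy', eps_shift (1+j) N (by omega)]
        exact h0 _ (by omega) (by omega)
      rw [Function.iterate_succ_apply', two_mul_eq, he, ih]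
      push_cast
      ring
  obtain ⟨j, hj⟩ := pow_unbounded_of_one_lt (1/y) (by norm_num : (1:ℝ) < 2)
  have h1 : T^[j] y ≤ 1 := (T_iter_mem hy j).2
  rw [hdig j] at h1
  have hy0 : 0 < y := hy.1
  rw [div_lt_iff₀ hy0] at hj
  nlinarith

lemma val_eps (hx : x ∈ Set.Ioc (0:ℝ) 1) : val (fun k => eps k x) = x := by
  have hbin : Bin (fun k => eps k x) := fun k => eps_mem hx k
  have htend := (summable_val hbin).hasSum.tendsto_sum_nat
  have h2 : Tendsto (fun n => ∑ k ∈ Finset.range n, ((eps (k+1) x : ℝ)/2^(k+1))) atTop (nhds x) := by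
    have hform : ∀ n : ℕ, ∑ k ∈ Finset.range n, ((eps (k+1) x : ℝ)/2^(k+1)) = x - T^[n] x/2^n :=
      fun n => by linarith [expansion (x := x) n]
    simp only [hform]
    have hz : Tendsto (fun n : ℕ => T^[n] x/2^n) atTop (nhds 0) := by
      have hg : Tendsto (fun n : ℕ => (1/2:ℝ)^n) atTop (nhds 0) :=
        tendsto_pow_atTop_nhds_zero_of_lt_one (by norm_num) (by norm_num)
      apply squeeze_zero_norm (fun n => ?_) hg
      have h := T_iter_mem hx n
      rw [Real.norm_eq_abs, abs_div, abs_of_pos h.1,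
        abs_of_pos (by positivity : (0:ℝ) < 2^n), one_div_pow]
      gcongr
      exact h.2
    have := (tendsto_const_nhds (x := x) (f := atTop (α := ℕ))).sub hz
    simpa using this
  exact tendsto_nhds_unique htend h2


variable {x y : ℝ}

lemma dist_le_of_digits_eq (hx : x ∈ Set.Ioc (0:ℝ) 1) (hy : y ∈ Set.Ioc (0:ℝ) 1) (n : ℕ)
    (h : ∀ k, 1 ≤ k → k ≤ n → eps k x = eps k y) : |x - y| ≤ (1/2)^n := by
  have hxe := expansion (x := x) n
  have hye := expansion (x := y) n
  have hsum : ∑ k ∈ Finset.range n, ((eps (k+1) x : ℝ))/2^(k+1)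
      = ∑ k ∈ Finset.range n, ((eps (k+1) y : ℝ))/2^(k+1) := by
    apply Finset.sum_congr rfl
    intro k hk
    rw [h (k+1) (by omega) (by simpa using Finset.mem_range.1 hk)]
  have he : (T^[n] x - T^[n] y)/2^n = T^[n] x/2^n - T^[n] y/2^n := by ring
  have hd : x - y = (T^[n] x - T^[n] y)/2^n := by
    linarith [hxe, hye, hsum, he]
  rw [hd, abs_div, abs_of_pos (by positivity : (0:ℝ) < 2^n), one_div_pow]
  gcongr
  have h1 := T_iter_mem hx n
  have h2 := T_iter_mem hy n
  rw [abs_le]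
  constructor <;> [linarith [h1.1, h2.2]; linarith [h1.2, h2.1]]

lemma eq_of_digits_eq (hx : x ∈ Set.Ioc (0:ℝ) 1) (hy : y ∈ Set.Ioc (0:ℝ) 1)
    (h : ∀ k, 1 ≤ k → eps k x = eps k y) : x = y := by
  have hle : ∀ n : ℕ, |x - y| ≤ (1/2)^n :=
    fun n => dist_le_of_digits_eq hx hy n (fun k h1 _ => h k h1)
  have h0 : |x - y| ≤ 0 := by
    apply le_of_tendsto_of_tendsto' (tendsto_const_nhds (x := |x - y|) (f := atTop (α := ℕ)))
      (tendsto_pow_atTop_nhds_zero_of_lt_one (by norm_num) (by norm_num : (1:ℝ)/2 < 1)) hle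
  have := abs_nonneg (x - y)
  have : |x - y| = 0 := le_antisymm h0 this
  linarith [abs_eq_zero.1 this |> sub_eq_zero.1]

lemma dist_ge_aux (hx : x ∈ Set.Ioc (0:ℝ) 1) (hy : y ∈ Set.Ioc (0:ℝ) 1) {n k₀ : ℕ}
    (h1 : 1 ≤ n) (hnk : n < k₀)
    (hpre : ∀ k, 1 ≤ k → k < n → eps k x = eps k y)
    (hnx : eps n x = 0) (hny : eps n y = 1)
    (hk₀ : eps k₀ x = eps k₀ y) : (1/2)^k₀ ≤ y - x := by
  have hxe := expansion (x := x) k₀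
  have hye := expansion (x := y) k₀
  -- y - x = ∑ (eps (k+1) y - eps (k+1) x)/2^(k+1) + (T^[k₀] y - T^[k₀] x)/2^k₀
  set f : ℕ → ℝ := fun k => ((eps (k+1) y : ℝ) - (eps (k+1) x : ℝ))/2^(k+1) with hf
  have hfs : ∑ k ∈ Finset.range k₀, f k
      = ∑ k ∈ Finset.range k₀, ((eps (k+1) y : ℝ))/2^(k+1)
        - ∑ k ∈ Finset.range k₀, ((eps (k+1) x : ℝ))/2^(k+1) := by
    rw [← Finset.sum_sub_distrib]
    apply Finset.sum_congr rfl
    intro k _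
    simp only [hf]
    ring
  have hering : (T^[k₀] y - T^[k₀] x)/2^k₀ = T^[k₀] y/2^k₀ - T^[k₀] x/2^k₀ := by ring
  have hyx : y - x = (∑ k ∈ Finset.range k₀, f k) + (T^[k₀] y - T^[k₀] x)/2^k₀ := by
    linarith [hye, hxe, hfs, hering]
  -- split range k₀ = range n ∪ Ico n k₀
  have hsplit : ∑ k ∈ Finset.range k₀, f k
      = ∑ k ∈ Finset.range n, f k + ∑ k ∈ Finset.Ico n k₀, f k := by
    exact (Finset.sum_range_add_sum_Ico f (le_of_lt hnk)).symm
  -- first part = (1/2)^n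
  have hfirst : ∑ k ∈ Finset.range n, f k = (1/2)^n := by
    rw [Finset.sum_eq_single (n-1)]
    · simp only [hf]
      rw [show n-1+1 = n by omega, hnx, hny]
      norm_num [one_div_pow]
    · intro k hk hkn
      have hk' : k + 1 < n := by
        have := Finset.mem_range.1 hk; omega
      simp only [hf]
      rw [hpre (k+1) (by omega) hk']
      ring
    · intro hmem
      exfalso
      exact hmem (Finset.mem_range.2 (by omega))
  -- second part ≥ -((1/2)^n - (1/2)^(k₀-1)) : each term ≥ -(1/2)^(k+1) except k₀-1 which is 0
  have hsecond : ∑ k ∈ Finset.Ico n k₀, f k ≥ -((1/2:ℝ)^n - (1/2)^(k₀-1)) := by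
    have hterm : ∀ k ∈ Finset.Ico n k₀, f k ≥ (if k = k₀ - 1 then 0 else -((1/2:ℝ)^(k+1))) := by
      intro k hk
      obtain ⟨hk1, hk2⟩ := Finset.mem_Ico.1 hk
      by_cases hkk : k = k₀ - 1
      · simp only [hkk, if_pos rfl, hf]
        rw [show k₀ - 1 + 1 = k₀ by omega, hk₀]
        simp
      · simp only [if_neg hkk, hf, ge_iff_le, one_div_pow]
        have hxk := eps_mem hx (k+1)
        have hyk := eps_mem hy (k+1)
        rw [show -(1/(2:ℝ)^(k+1)) = (-1)/2^(k+1) by ring]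
        gcongr
        rcases hxk with h' | h' <;> rcases hyk with h'' | h'' <;> rw [h', h''] <;> push_cast <;> norm_num
    calc ∑ k ∈ Finset.Ico n k₀, f k
        ≥ ∑ k ∈ Finset.Ico n k₀, (if k = k₀ - 1 then (0:ℝ) else -((1/2)^(k+1))) :=
          Finset.sum_le_sum hterm
      _ = -((1/2:ℝ)^n - (1/2)^(k₀-1)) := by
          have hgeom : ∑ k ∈ Finset.Ico n k₀, (1/2:ℝ)^(k+1) = (1/2)^n - (1/2)^k₀ := by
            have hg := geom_sum_Ico (x := (1/2:ℝ)) (by norm_num) hnk.le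
            have h2 : ∑ k ∈ Finset.Ico n k₀, (1/2:ℝ)^(k+1)
                = (∑ k ∈ Finset.Ico n k₀, (1/2:ℝ)^k) * (1/2) := by
              rw [Finset.sum_mul]
              exact Finset.sum_congr rfl fun k _ => (pow_succ _ _)
            rw [h2, hg]
            ring
          have hsplit2 : ∀ k ∈ Finset.Ico n k₀,
              (if k = k₀ - 1 then (0:ℝ) else -((1/2)^(k+1)))
              = -((1/2:ℝ)^(k+1)) + (if k = k₀ - 1 then (1/2:ℝ)^(k+1) else 0) := by
            intro k _
            by_cases hkk : k = k₀ - 1 <;> simp [hkk]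
          rw [Finset.sum_congr rfl hsplit2, Finset.sum_add_distrib]
          have hneg : ∑ k ∈ Finset.Ico n k₀, -((1/2:ℝ)^(k+1)) = -((1/2:ℝ)^n - (1/2)^k₀) := by
            rw [Finset.sum_neg_distrib, hgeom]
          have hif : ∑ k ∈ Finset.Ico n k₀, (if k = k₀ - 1 then (1/2:ℝ)^(k+1) else 0)
              = (1/2:ℝ)^k₀ := by
            rw [Finset.sum_ite_eq' (Finset.Ico n k₀) (k₀ - 1) (fun k => (1/2:ℝ)^(k+1)),
              if_pos (Finset.mem_Ico.2 ⟨by omega, by omega⟩), show k₀ - 1 + 1 = k₀ by omega]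
          have hpow : (1/2:ℝ)^(k₀-1) = 2*(1/2)^k₀ := by
            obtain ⟨m, hm⟩ : ∃ m, k₀ = m + 1 := ⟨k₀ - 1, by omega⟩
            subst hm
            simp [pow_succ]
            ring
          rw [hneg, hif]
          linarith [hpow]
  have hT : (T^[k₀] y - T^[k₀] x)/2^k₀ ≥ -((1/2:ℝ)^k₀) := by
    have h1' := T_iter_mem hx k₀
    have h2' := T_iter_mem hy k₀
    rw [ge_iff_le, one_div_pow, show -(1/(2:ℝ)^k₀) = (-1)/2^k₀ by ring]
    gcongr
    linarith [h1'.2, h2'.1]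
  have hk₀1 : (1/2:ℝ)^(k₀-1) = 2 * (1/2)^k₀ := by
    obtain ⟨m, hm⟩ : ∃ m, k₀ = m + 1 := ⟨k₀ - 1, by omega⟩
    subst hm
    simp [pow_succ]
    ring
  linarith [hyx, hsplit, hfirst, hsecond, hT]


/-- auxiliary sparse sequence with small gaps -/
def gseq (q : ℕ) : ℕ → ℕ
  | 0 => 1
  | i+1 => gseq q i + gseq q i / q + 1

lemma gseq_strictMono (q : ℕ) : StrictMono (gseq q) :=
  strictMono_nat_of_lt_succ (fun i =>
    Nat.lt_succ_of_le (Nat.le_add_right (gseq q i) (gseq q i / q)))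

lemma gseq_pos (q i : ℕ) : 1 ≤ gseq q i := by
  induction i with
  | zero => simp [gseq]
  | succ i ih => exact Nat.le_add_left 1 (gseq q i + gseq q i / q)

lemma gseq_step {q : ℕ} (hq : 1 ≤ q) (i : ℕ) :
    (1 + 1/(q:ℝ)) * gseq q i ≤ gseq q (i+1) := by
  have hq0 : (0:ℝ) < q := by exact_mod_cast hq
  have hdm : (q:ℕ) * (gseq q i / q) + gseq q i % q = gseq q i := Nat.div_add_mod _ _
  have hmod : gseq q i % q < q := Nat.mod_lt _ (by omega)
  have hdm' : (q:ℝ) * ((gseq q i / q : ℕ):ℝ) + ((gseq q i % q : ℕ):ℝ) = (gseq q i : ℝ) := by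
    exact_mod_cast congrArg (Nat.cast : ℕ → ℝ) hdm
  have hmod' : ((gseq q i % q : ℕ):ℝ) ≤ (q:ℝ) - 1 := by
    have : gseq q i % q ≤ q - 1 := by omega
    have h2 : ((gseq q i % q : ℕ):ℝ) ≤ ((q - 1 : ℕ):ℝ) := by exact_mod_cast this
    rwa [Nat.cast_sub hq, Nat.cast_one] at h2
  have hs : (gseq q (i+1) : ℝ) = (gseq q i : ℝ) + ((gseq q i / q : ℕ):ℝ) + 1 := by
    rw [show gseq q (i+1) = gseq q i + gseq q i / q + 1 from rfl]
    push_cast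
    ring
  rw [hs]
  set g : ℝ := (gseq q i : ℝ) with hg
  set d : ℝ := ((gseq q i / q : ℕ):ℝ) with hd
  have hgle : g ≤ (q:ℝ) * d + q := by linarith
  have hcomp : (g + d + 1 - (1+1/(q:ℝ))*g) * q = q*d + q - g := by
    field_simp
    ring
  have h7 : (0:ℝ) ≤ (g + d + 1 - (1+1/(q:ℝ))*g) * q := by rw [hcomp]; linarith
  have h8 := div_nonneg h7 hq0.le
  rw [mul_div_cancel_right₀ _ (ne_of_gt hq0)] at h8
  linarith

lemma gseq_double {q : ℕ} (hq : 1 ≤ q) (i : ℕ) :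
    2 * (gseq q i : ℝ) ≤ gseq q (i + q) := by
  have hq0 : (0:ℝ) < q := by exact_mod_cast hq
  have key : ∀ j, (1 + 1/(q:ℝ))^j * gseq q i ≤ gseq q (i+j) := by
    intro j
    induction j with
    | zero => simp
    | succ j ih =>
      have h1 := gseq_step hq (i+j)
      calc (1 + 1/(q:ℝ))^(j+1) * gseq q i = (1 + 1/(q:ℝ)) * ((1+1/(q:ℝ))^j * gseq q i) := by ring
        _ ≤ (1 + 1/(q:ℝ)) * gseq q (i+j) := by
            apply mul_le_mul_of_nonneg_left ih
            positivity
        _ ≤ gseq q (i+j+1) := h1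
  have hbern : (2:ℝ) ≤ (1 + 1/(q:ℝ))^q := by
    have hnn : (0:ℝ) ≤ 1/(q:ℝ) := by positivity
    have := one_add_mul_le_pow (a := 1/(q:ℝ)) (by linarith : (-2:ℝ) ≤ 1/(q:ℝ)) q
    have hq1 : (q:ℝ) * (1/(q:ℝ)) = 1 := by field_simp
    rw [hq1] at this
    linarith
  calc 2 * (gseq q i : ℝ) ≤ (1 + 1/(q:ℝ))^q * gseq q i := by
        apply mul_le_mul_of_nonneg_right hbern
        positivity
    _ ≤ gseq q (i+q) := key q

lemma gseq_pow {q : ℕ} (hq : 1 ≤ q) (j : ℕ) : (2:ℝ)^j ≤ gseq q (q * j) := by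
  induction j with
  | zero => simp [gseq]
  | succ j ih =>
    have h2 := gseq_double hq (q*j)
    have : q * (j+1) = q*j + q := by ring
    rw [this, pow_succ]
    nlinarith

lemma sq_le_two_pow : ∀ L : ℕ, 4 ≤ L → L * L ≤ 2^L := by
  intro L hL
  induction L, hL using Nat.le_induction with
  | base => norm_num
  | succ L hL ih =>
    have h2 : 2^(L+1) = 2 * 2^L := by ring
    nlinarith

/-- accessory: if `gseq q i ≤ n` then `i < q * (Nat.log 2 n + 1)` -/
lemma gseq_index_bound {q : ℕ} (hq : 1 ≤ q) {i n : ℕ} (hn : 1 ≤ n) (h : gseq q i ≤ n) :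
    i < q * (Nat.log 2 n + 1) := by
  by_contra hcon
  push_neg at hcon
  have h1 : (gseq q (q * (Nat.log 2 n + 1)) : ℝ) ≤ gseq q i := by
    exact_mod_cast (gseq_strictMono q).monotone hcon
  have h2 := gseq_pow hq (Nat.log 2 n + 1)
  have h3 : n < 2^(Nat.log 2 n + 1) := Nat.lt_pow_succ_log_self (by omega) n
  have h3' : (n:ℝ) < 2^(Nat.log 2 n + 1) := by exact_mod_cast h3
  have h4 : (gseq q i : ℝ) ≤ n := by exact_mod_cast h
  linarith

lemma log_linear_bound {q : ℕ} (hq : 1 ≤ q) :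
    ∃ D : ℝ, 0 ≤ D ∧ ∀ n : ℕ, (q * (Nat.log 2 n + 1) : ℝ) ≤ n/(4*q) + D := by
  set K := 4 * q * q with hK
  have hq0 : (0:ℝ) < q := by exact_mod_cast hq
  have h4q : (0:ℝ) < 4*q := by linarith
  refine ⟨q * (K + 5), by positivity, fun n => ?_⟩
  rcases Nat.lt_or_ge n (2^(K+4)) with h | h
  · have hL : Nat.log 2 n ≤ K + 4 := by
      calc Nat.log 2 n ≤ Nat.log 2 (2^(K+4)) := Nat.log_mono_right (by omega)
        _ = K + 4 := Nat.log_pow (by omega) _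
    have : (q * (Nat.log 2 n + 1) : ℝ) ≤ (q : ℝ) * (K + 5) := by
      have : (Nat.log 2 n + 1 : ℕ) ≤ K + 5 := by omega
      have hcast : ((Nat.log 2 n + 1 : ℕ):ℝ) ≤ ((K + 5 : ℕ):ℝ) := by exact_mod_cast this
      calc (q * (Nat.log 2 n + 1) : ℝ) = (q:ℝ) * ((Nat.log 2 n + 1 : ℕ):ℝ) := by push_cast; ring
        _ ≤ (q:ℝ) * ((K+5:ℕ):ℝ) := by
            apply mul_le_mul_of_nonneg_left hcast
            positivity
        _ = (q:ℝ) * (K+5) := by push_cast; ring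
    have hn : (0:ℝ) ≤ (n:ℝ)/(4*q) := by positivity
    linarith
  · -- n ≥ 2^(K+4) : K * (L+1) ≤ n
    set L := Nat.log 2 n with hL
    have hLK : K + 4 ≤ L := by
      calc K + 4 = Nat.log 2 (2^(K+4)) := (Nat.log_pow (by omega) _).symm
        _ ≤ L := Nat.log_mono_right h
    have hKL : K * (L+1) ≤ 2^L := by
      calc K * (L+1) ≤ L * L := by nlinarith
        _ ≤ 2^L := sq_le_two_pow L (by omega)
    have hn0 : n ≠ 0 := by
      have := Nat.one_le_two_pow (n := K+4)
      omega
    have h2L : 2^L ≤ n := Nat.pow_log_le_self 2 hn0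
    have hnat : K * (L + 1) ≤ n := le_trans hKL h2L
    have hreal : (K : ℝ) * (L+1) ≤ n := by exact_mod_cast hnat
    have : (q * (L + 1) : ℝ) ≤ (n:ℝ)/(4*q) := by
      rw [le_div_iff₀ h4q]
      calc (q * (L+1) : ℝ) * (4*q) = (K:ℝ) * (L+1) := by rw [hK]; push_cast; ring
        _ ≤ n := hreal
    have hD : (0:ℝ) ≤ (q:ℝ) * (K + 5) := by positivity
    linarith


variable {c d : ℕ → ℤ} {x y : ℝ}

lemma dist_ge (hx : x ∈ Set.Ioc (0:ℝ) 1) (hy : y ∈ Set.Ioc (0:ℝ) 1) {n k₀ : ℕ}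
    (h1 : 1 ≤ n) (hnk : n < k₀)
    (hpre : ∀ k, 1 ≤ k → k < n → eps k x = eps k y)
    (hne : eps n x ≠ eps n y)
    (hk₀ : eps k₀ x = eps k₀ y) : (1/2)^k₀ ≤ |x - y| := by
  have hppos : (0:ℝ) < (1/2:ℝ)^k₀ := by positivity
  rcases eps_mem hx n with h0 | h0 <;> rcases eps_mem hy n with h0' | h0'
  · exact absurd (h0.trans h0'.symm) hne
  · have := dist_ge_aux hx hy h1 hnk hpre h0 h0' hk₀
    rw [abs_sub_comm, abs_of_nonneg (by linarith)]
    linarith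
  · have := dist_ge_aux hy hx h1 hnk (fun k a b => (hpre k a b).symm) h0' h0 hk₀.symm
    rw [abs_of_nonneg (by linarith)]
    linarith
  · exact absurd (h0.trans h0'.symm) hne

lemma val_congr (h : ∀ k : ℕ, c (k+1) = d (k+1)) : val c = val d :=
  tsum_congr (fun k => by rw [h k])

lemma val_dist_of_agree (hc : Bin c) (hd : Bin d) (P : ℕ)
    (h : ∀ k, 1 ≤ k → k ≤ P → c k = d k) : |val c - val d| ≤ (1/2)^P := by
  have hsc := val_split hc P
  have hsd := val_split hd P
  have hsum : ∑ k ∈ Finset.range P, ((c (k+1):ℝ))/2^(k+1)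
      = ∑ k ∈ Finset.range P, ((d (k+1):ℝ))/2^(k+1) := by
    apply Finset.sum_congr rfl
    intro k hk
    rw [h (k+1) (by omega) (by simpa using Finset.mem_range.1 hk)]
  have hdiff : val c - val d = (1/2)^P * (val (fun k => c (k+P)) - val (fun k => d (k+P))) := by
    rw [hsc, hsd, hsum]
    ring
  rw [hdiff, abs_mul, abs_of_pos (by positivity : (0:ℝ) < (1/2:ℝ)^P)]
  have h1 : Bin (fun k => c (k+P)) := fun k => hc (k+P)
  have h2 : Bin (fun k => d (k+P)) := fun k => hd (k+P)
  have habs : |val (fun k => c (k+P)) - val (fun k => d (k+P))| ≤ 1 := by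
    rw [abs_le]
    constructor
    · linarith [val_nonneg h1, val_le_one h2]
    · linarith [val_le_one h1, val_nonneg h2]
  calc (1/2:ℝ)^P * |val (fun k => c (k+P)) - val (fun k => d (k+P))|
      ≤ (1/2:ℝ)^P * 1 := by
        apply mul_le_mul_of_nonneg_left habs
        positivity
    _ = (1/2:ℝ)^P := by ring

section core
variable (J' : Set ℕ) (b : ℕ → ℤ)

noncomputable def pfree : ℕ → Prop := fun k => 1 ≤ k ∧ k ∉ J'

noncomputable def insd (y : ℝ) : ℕ → ℤ :=
  fun k => if k ∈ J' then b k else eps (Nat.count (pfree J') k + 1) y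

noncomputable def gmap (y : ℝ) : ℝ := val (insd J' b y)

noncomputable def hmap (x : ℝ) : ℝ := val (fun j => eps (Nat.nth (pfree J') (j-1)) x)

variable {J' b}

lemma insd_bin (hb : Bin b) (hy : y ∈ Set.Ioc (0:ℝ) 1) : Bin (insd J' b y) := by
  intro k
  unfold insd
  split
  · exact hb k
  · exact eps_mem hy _

lemma insd_inf1 (hinf : (setOf (pfree J')).Infinite) (hy : y ∈ Set.Ioc (0:ℝ) 1) :
    Inf1 (insd J' b y) := by
  intro N
  obtain ⟨j, hj1, hj⟩ := eps_inf1 hy (N+1)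
  refine ⟨Nat.nth (pfree J') (j-1), ?_, ?_⟩
  · have h1 : j - 1 ≤ Nat.nth (pfree J') (j-1) := (Nat.nth_strictMono hinf).le_apply
    omega
  · have hp : pfree J' (Nat.nth (pfree J') (j-1)) := Nat.nth_mem_of_infinite hinf _
    unfold insd
    rw [if_neg hp.2, Nat.count_nth_of_infinite hinf, show j - 1 + 1 = j by omega]
    exact hj

lemma gmap_mem (hinf : (setOf (pfree J')).Infinite) (hb : Bin b)
    (hy : y ∈ Set.Ioc (0:ℝ) 1) : gmap J' b y ∈ Set.Ioc (0:ℝ) 1 :=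
  val_mem (insd_bin hb hy) (insd_inf1 hinf hy)

lemma eps_gmap (hinf : (setOf (pfree J')).Infinite) (hb : Bin b)
    (hy : y ∈ Set.Ioc (0:ℝ) 1) (k : ℕ) (hk : 1 ≤ k) :
    eps k (gmap J' b y) = insd J' b y k :=
  eps_val (insd_bin hb hy) (insd_inf1 hinf hy) k hk

lemma hmap_gmap (hinf : (setOf (pfree J')).Infinite) (hb : Bin b)
    (hy : y ∈ Set.Ioc (0:ℝ) 1) : hmap J' (gmap J' b y) = y := by
  unfold hmap
  have hcong : ∀ k : ℕ, eps (Nat.nth (pfree J') (k+1-1)) (gmap J' b y) = eps (k+1) y := by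
    intro k
    have hp : pfree J' (Nat.nth (pfree J') (k+1-1)) := Nat.nth_mem_of_infinite hinf _
    rw [eps_gmap hinf hb hy _ hp.1]
    unfold insd
    rw [if_neg hp.2, Nat.add_sub_cancel, Nat.count_nth_of_infinite hinf]
  rw [val_congr (d := fun k => eps k y) hcong]
  exact val_eps hy
end core

section core2
variable {J' : Set ℕ} {b : ℕ → ℤ}

lemma count_pfree_add (m : ℕ) :
    Nat.count (pfree J') (m+1) + ((Finset.Icc 1 m).filter (· ∈ J')).card = m := by
  have h1 : Nat.count (pfree J') (m+1) = ((Finset.Icc 1 m).filter (· ∉ J')).card := by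
    rw [Nat.count_eq_card_filter_range]
    congr 1
    ext i
    simp only [Finset.mem_filter, Finset.mem_range, Finset.mem_Icc, Nat.lt_succ_iff, pfree]
    refine (@Finset.mem_filter ℕ (fun x => 1 ≤ x ∧ x ∉ J') (fun a => Classical.propDecidable (pfree J' a)) (Finset.range (m+1)) i).trans ?_
    rw [Finset.mem_range, Nat.lt_succ_iff]
    tauto
  have h2 := Finset.card_filter_add_card_filter_not
    (s := Finset.Icc 1 m) (p := (· ∈ J'))
  have h2' : ((Finset.Icc 1 m).filter (· ∈ J')).card
      + ((Finset.Icc 1 m).filter (· ∉ J')).card = (Finset.Icc 1 m).card := h2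
  rw [Nat.card_Icc] at h2'
  omega

lemma holder_est {q : ℕ} {D : ℝ}
    (hinf : (setOf (pfree J')).Infinite) (hq : 1 ≤ q) (hD : 0 ≤ D)
    (hGap : ∀ n : ℕ, 1 ≤ n → ∃ k, k ∈ J' ∧ n < k ∧ (k:ℝ) ≤ (n:ℝ) + (n:ℝ)/q + 1)
    (hden : ∀ n : ℕ, (((Finset.Icc 1 n).filter (· ∈ J')).card : ℝ) ≤ (n:ℝ)/(2*q) + D)
    {x y : ℝ} (hx : x ∈ Set.Ioc (0:ℝ) 1) (hy : y ∈ Set.Ioc (0:ℝ) 1)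
    (hbx : ∀ k ∈ J', eps k x = b k) (hby : ∀ k ∈ J', eps k y = b k) :
    |hmap J' x - hmap J' y| ≤ 2^(D+2) * |x - y| ^ ((2*(q:ℝ)-1)/(2*(q:ℝ)+2)) := by
  have hQ : (0:ℝ) < q := by exact_mod_cast hq
  have hQ1 : (1:ℝ) ≤ q := by exact_mod_cast hq
  set rr : ℝ := (2*(q:ℝ)-1)/(2*(q:ℝ)+2) with hrr
  have hr0 : 0 < rr := by
    rw [hrr]
    apply div_pos <;> linarith
  have hr1 : rr ≤ 1 := by rw [hrr, div_le_one (by linarith)]; linarith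
  by_cases hxy : x = y
  · subst hxy
    simp [Real.zero_rpow (ne_of_gt hr0)]
  have hex : ∃ k, 1 ≤ k ∧ eps k x ≠ eps k y := by
    by_contra hcon
    push_neg at hcon
    exact hxy (eq_of_digits_eq hx hy hcon)
  set n := Nat.find hex with hn
  obtain ⟨hn1, hne⟩ : 1 ≤ n ∧ eps n x ≠ eps n y := Nat.find_spec hex
  have hpre : ∀ k, 1 ≤ k → k < n → eps k x = eps k y := by
    intro k h1 h2
    by_contra hc
    exact Nat.find_min hex h2 ⟨h1, hc⟩
  obtain ⟨k₀, hk₀J, hk₀n, hk₀le⟩ := hGap n hn1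
  have hlow : (1/2:ℝ)^k₀ ≤ |x - y| :=
    dist_ge hx hy hn1 hk₀n hpre hne (by rw [hbx _ hk₀J, hby _ hk₀J])
  set P := Nat.count (pfree J') n with hP
  have hup : |hmap J' x - hmap J' y| ≤ (1/2:ℝ)^P := by
    unfold hmap
    apply val_dist_of_agree (fun j => eps_mem hx _) (fun j => eps_mem hy _) P
    intro j hj1 hjP
    have hlt : Nat.nth (pfree J') (j-1) < n :=
      (Nat.lt_nth_iff_count_lt hinf).1 (by omega)
    have hp1 : 1 ≤ Nat.nth (pfree J') (j-1) := (Nat.nth_mem_of_infinite hinf (j-1)).1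
    exact hpre _ hp1 hlt
  have h2q : (0:ℝ) < 2*q := by linarith
  have hPn : (n:ℝ) - 1 - ((n:ℝ)/(2*q) + D) ≤ (P:ℝ) := by
    have hcnt := count_pfree_add (J' := J') (n-1)
    rw [show n - 1 + 1 = n by omega] at hcnt
    have hden' := hden (n-1)
    have hcast : (P:ℝ) + (((Finset.Icc 1 (n-1)).filter (· ∈ J')).card : ℝ) = ((n-1:ℕ):ℝ) := by
      exact_mod_cast congrArg (Nat.cast : ℕ → ℝ) hcnt
    have hnn : ((n-1:ℕ):ℝ) = (n:ℝ) - 1 := by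
      rw [Nat.cast_sub hn1, Nat.cast_one]
    rw [hnn] at hcast hden'
    have hdd : ((n:ℝ) - 1)/(2*q) = (n:ℝ)/(2*q) - 1/(2*q) := by ring
    have h1q : (0:ℝ) < 1/(2*q) := by positivity
    linarith
  have harith : rr * k₀ ≤ (P:ℝ) + D + 2 := by
    have e1 : rr * ((n:ℝ) + (n:ℝ)/q + 1) = (n:ℝ) - (n:ℝ)/(2*q) + rr := by
      rw [hrr]
      field_simp
    have hk : rr * (k₀:ℝ) ≤ rr * ((n:ℝ) + (n:ℝ)/q + 1) := mul_le_mul_of_nonneg_left hk₀le hr0.le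
    linarith
  have hxypos : (0:ℝ) < |x - y| := abs_pos.2 (sub_ne_zero.2 hxy)
  have c1 : ((1/2:ℝ)^k₀) ^ rr ≤ |x - y| ^ rr := Real.rpow_le_rpow (by positivity) hlow hr0.le
  have c2 : (((1/2:ℝ)^k₀ : ℝ)) ^ rr = (2:ℝ)^(-(rr * (k₀:ℝ))) := by
    rw [← Real.rpow_natCast (1/2:ℝ) k₀, ← Real.rpow_mul (by norm_num : (0:ℝ) ≤ 1/2),
      show (1/2:ℝ) = 2⁻¹ by norm_num, Real.inv_rpow (by norm_num : (0:ℝ) ≤ 2),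
      ← Real.rpow_neg (by norm_num : (0:ℝ) ≤ 2)]
    ring_nf
  have c3 : (1/2:ℝ)^P = (2:ℝ)^(-(P:ℝ)) := by
    rw [← Real.rpow_natCast (1/2:ℝ) P, show (1/2:ℝ) = 2⁻¹ by norm_num,
      Real.inv_rpow (by norm_num : (0:ℝ) ≤ 2), ← Real.rpow_neg (by norm_num : (0:ℝ) ≤ 2)]
  have c4 : (2:ℝ)^(-(P:ℝ)) ≤ (2:ℝ)^(D+2) * (2:ℝ)^(-(rr*(k₀:ℝ))) := by
    rw [← Real.rpow_add (by norm_num : (0:ℝ) < 2)]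
    apply (Real.rpow_le_rpow_left_iff (by norm_num : (1:ℝ) < 2)).2
    linarith
  calc |hmap J' x - hmap J' y| ≤ (1/2:ℝ)^P := hup
    _ = (2:ℝ)^(-(P:ℝ)) := c3
    _ ≤ (2:ℝ)^(D+2) * (2:ℝ)^(-(rr*(k₀:ℝ))) := c4
    _ = (2:ℝ)^(D+2) * ((1/2:ℝ)^k₀)^rr := by rw [c2]
    _ ≤ (2:ℝ)^(D+2) * |x - y|^rr := by
        apply mul_le_mul_of_nonneg_left c1
        positivity
end core2

section core3
variable {J' : Set ℕ} {b : ℕ → ℤ}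

lemma dim_lower {q : ℕ} {D : ℝ}
    (hinf : (setOf (pfree J')).Infinite) (hb : Bin b) (hJ1 : ∀ k ∈ J', 1 ≤ k)
    (hq : 1 ≤ q) (hD : 0 ≤ D)
    (hGap : ∀ n : ℕ, 1 ≤ n → ∃ k, k ∈ J' ∧ n < k ∧ (k:ℝ) ≤ (n:ℝ) + (n:ℝ)/q + 1)
    (hden : ∀ n : ℕ, (((Finset.Icc 1 n).filter (· ∈ J')).card : ℝ) ≤ (n:ℝ)/(2*q) + D) :
    ENNReal.ofReal ((2*(q:ℝ)-1)/(2*(q:ℝ)+2)) ≤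
      dimH {x : ℝ | x ∈ Set.Ioc (0:ℝ) 1 ∧ ∀ k ∈ J', eps k x = b k} := by
  have hQ : (0:ℝ) < q := by exact_mod_cast hq
  have hQ1 : (1:ℝ) ≤ q := by exact_mod_cast hq
  set rr : ℝ := (2*(q:ℝ)-1)/(2*(q:ℝ)+2) with hrr
  have hr0 : 0 < rr := by
    rw [hrr]
    apply div_pos <;> linarith
  set s := gmap J' b '' (Set.Ioc (0:ℝ) 1) with hs
  have hsub : s ⊆ {x : ℝ | x ∈ Set.Ioc (0:ℝ) 1 ∧ ∀ k ∈ J', eps k x = b k} := by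
    rintro _ ⟨y, hy, rfl⟩
    refine ⟨gmap_mem hinf hb hy, fun k hk => ?_⟩
    rw [eps_gmap hinf hb hy k (hJ1 k hk)]
    unfold insd
    rw [if_pos hk]
  set C : ℝ≥0 := Real.toNNReal (2^(D+2)) with hC
  set r : ℝ≥0 := Real.toNNReal rr with hr
  have hrcoe : (r:ℝ) = rr := Real.coe_toNNReal _ hr0.le
  have hrpos : 0 < r := Real.toNNReal_pos.2 hr0
  have hH : HolderOnWith C r (hmap J') s := by
    intro x hx' y hy'
    have hx'' := hsub hx'
    have hy'' := hsub hy'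
    have hest := holder_est hinf hq hD hGap hden hx''.1 hy''.1 hx''.2 hy''.2
    rw [edist_dist, edist_dist, Real.dist_eq, Real.dist_eq]
    have hCoe : (C : ℝ≥0∞) = ENNReal.ofReal (2^(D+2)) := rfl
    rw [hCoe, hrcoe, ENNReal.ofReal_rpow_of_nonneg (abs_nonneg _) hr0.le,
      ← ENNReal.ofReal_mul (by positivity : (0:ℝ) ≤ (2:ℝ)^(D+2))]
    exact ENNReal.ofReal_le_ofReal hest
  have him : hmap J' '' s = Set.Ioc (0:ℝ) 1 := by
    rw [hs, Set.image_image]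
    have heq : Set.EqOn (fun y => hmap J' (gmap J' b y)) id (Set.Ioc (0:ℝ) 1) :=
      fun y hy => hmap_gmap hinf hb hy
    rw [Set.image_congr heq, Set.image_id]
  have h1 := hH.dimH_image_le hrpos
  rw [him] at h1
  have hIoc : dimH (Set.Ioc (0:ℝ) 1) = 1 := by
    rw [Real.dimH_of_nonempty_interior (by rw [interior_Ioc]; exact ⟨1/2, by norm_num⟩)]
    simp
  rw [hIoc] at h1
  have h2 : (r : ℝ≥0∞) ≤ dimH s := by
    have h3 := (ENNReal.le_div_iff_mul_le
      (Or.inl (by exact_mod_cast hrpos.ne' : (r:ℝ≥0∞) ≠ 0))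
      (Or.inl ENNReal.coe_ne_top)).1 h1
    simpa using h3
  have h4 : ENNReal.ofReal rr = (r : ℝ≥0∞) := rfl
  exact le_trans (le_of_eq h4) (le_trans h2 (dimH_mono hsub))
end core3


lemma gseq_ge (q n : ℕ) : n + 1 ≤ gseq q n := by
  induction n with
  | zero => simp [gseq]
  | succ n ih =>
    have h2 : gseq q n < gseq q (n+1) := gseq_strictMono q (by omega)
    omega

theorem saint_petersburg_stmt10 (J : Set ℕ) (hJ : ∀ k ∈ J, 1 ≤ k)
    (hd : Filter.Tendsto
      (fun n : ℕ => (((Finset.Icc 1 n).filter (fun k => k ∈ J)).card : ℝ) / n)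
      Filter.atTop (nhds 0))
    (a : ℕ → ℤ) (ha : ∀ k, a k = 0 ∨ a k = 1) :
    dimH {x : ℝ | x ∈ Set.Ioc (0 : ℝ) 1 ∧ ∀ k ∈ J, eps k x = a k} = 1 := by
  apply le_antisymm
  · calc dimH {x : ℝ | x ∈ Set.Ioc (0 : ℝ) 1 ∧ ∀ k ∈ J, eps k x = a k}
        ≤ dimH (Set.univ : Set ℝ) := dimH_mono (Set.subset_univ _)
      _ = 1 := Real.dimH_univ
  · apply ENNReal.le_of_forall_nnreal_lt
    intro cc hcc
    have hclt : ((cc:ℝ)) < 1 := by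
      have := ENNReal.coe_lt_one_iff.1 hcc
      exact_mod_cast this
    set c : ℝ := (cc : ℝ) with hcdef
    have hc0 : 0 ≤ c := cc.coe_nonneg
    have h1c : (0:ℝ) < 1 - c := by linarith
    obtain ⟨q, hq⟩ := exists_nat_gt ((1+2*c)/(2*(1-c)))
    have hqpos : (0:ℝ) < (1+2*c)/(2*(1-c)) := by positivity
    have hq1 : 1 ≤ q := by
      by_contra h
      push_neg at h
      interval_cases q
      simp at hq
      linarith
    have hQ : (0:ℝ) < q := by exact_mod_cast hq1
    -- the enlarged exceptional set
    set Gq : Set ℕ := {k | ∃ i, gseq q i = k} with hGq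
    set J2 : Set ℕ := J ∪ Gq with hJ2
    set b : ℕ → ℤ := fun k => if k ∈ J then a k else 1 with hbdef
    have hbBin : Bin b := by
      intro k
      simp only [hbdef]
      split
      · exact ha k
      · exact Or.inr rfl
    have hJ1 : ∀ k ∈ J2, 1 ≤ k := by
      rintro k (hk | ⟨i, rfl⟩)
      · exact hJ k hk
      · exact gseq_pos q i
    -- gap property
    have hGap : ∀ n : ℕ, 1 ≤ n → ∃ k, k ∈ J2 ∧ n < k ∧ (k:ℝ) ≤ (n:ℝ) + (n:ℝ)/q + 1 := by
      intro n hn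
      have hex : ∃ i, n < gseq q i := ⟨n, by have := gseq_ge q n; omega⟩
      have hspec : n < gseq q (Nat.find hex) := Nat.find_spec hex
      have hi0 : Nat.find hex ≠ 0 := by
        intro h0
        rw [h0] at hspec
        have hg0 : gseq q 0 = 1 := rfl
        omega
      set i' := Nat.find hex - 1 with hi'
      have hfind : Nat.find hex = i' + 1 := by omega
      have hle : gseq q i' ≤ n := by
        have := Nat.find_min hex (m := i') (by omega)
        omega
      refine ⟨gseq q (i'+1), Or.inr ⟨i'+1, rfl⟩, by rw [← hfind]; exact hspec, ?_⟩
      have hstep : gseq q (i'+1) = gseq q i' + gseq q i' / q + 1 := rfl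
      have hdconv : ((gseq q i' / q : ℕ) : ℝ) ≤ (gseq q i' : ℝ)/(q:ℝ) := Nat.cast_div_le
      have hgle : (gseq q i' : ℝ) ≤ n := by exact_mod_cast hle
      have hmono : (gseq q i' : ℝ)/(q:ℝ) ≤ (n:ℝ)/(q:ℝ) := by gcongr
      rw [hstep]
      push_cast
      linarith
    -- density of J
    have hJden : ∃ NJ : ℕ, ∀ n : ℕ,
        (((Finset.Icc 1 n).filter (· ∈ J)).card : ℝ) ≤ (n:ℝ)/(4*q) + NJ := by
      have hq4 : (0:ℝ) < 1/(4*q) := by positivity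
      have hev := hd.eventually (gt_mem_nhds hq4)
      obtain ⟨N, hN⟩ := eventually_atTop.1 hev
      refine ⟨N + 1, fun n => ?_⟩
      have hNr : (0:ℝ) ≤ ((N+1:ℕ):ℝ) := by positivity
      rcases le_or_gt (N+1) n with h | h
      · have hn0 : (0:ℝ) < n := by exact_mod_cast (by omega : 0 < n)
        have h2 := hN n (by omega)
        rw [div_lt_iff₀ hn0] at h2
        have h3 : 1/(4*(q:ℝ)) * n = (n:ℝ)/(4*q) := by ring
        have h4 : (0:ℝ) ≤ ((N+1:ℕ):ℝ) := hNr
        push_cast at h4 ⊢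
        push_cast at h2
        linarith
      · have hcard : ((Finset.Icc 1 n).filter (· ∈ J)).card ≤ n := by
          calc ((Finset.Icc 1 n).filter (· ∈ J)).card ≤ (Finset.Icc 1 n).card :=
                Finset.card_filter_le _ _
            _ = n := by rw [Nat.card_Icc]; omega
        have h5 : (((Finset.Icc 1 n).filter (· ∈ J)).card : ℝ) ≤ (n:ℝ) := by exact_mod_cast hcard
        have h6 : (n:ℝ) ≤ ((N+1:ℕ):ℝ) := by exact_mod_cast h.le
        have h7 : (0:ℝ) ≤ (n:ℝ)/(4*q) := by positivity
        push_cast at h6 ⊢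
        linarith
    obtain ⟨NJ, hNJ⟩ := hJden
    -- density of Gq
    obtain ⟨DG, hDG0, hDG⟩ := log_linear_bound hq1
    have hGcnt : ∀ n : ℕ, ((Finset.Icc 1 n).filter (· ∈ Gq)).card ≤ q * (Nat.log 2 n + 1) := by
      intro n
      rcases Nat.eq_zero_or_pos n with h0 | hn1
      · subst h0
        simp
      · have hsubset : (Finset.Icc 1 n).filter (· ∈ Gq)
            ⊆ (Finset.range (q * (Nat.log 2 n + 1))).image (gseq q) := by
          intro k hk
          obtain ⟨hk1, hkG⟩ := Finset.mem_filter.1 hk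
          obtain ⟨i, rfl⟩ := hkG
          have hle : gseq q i ≤ n := (Finset.mem_Icc.1 hk1).2
          exact Finset.mem_image.2 ⟨i,
            Finset.mem_range.2 (gseq_index_bound hq1 hn1 hle), rfl⟩
        calc ((Finset.Icc 1 n).filter (· ∈ Gq)).card
            ≤ ((Finset.range (q * (Nat.log 2 n + 1))).image (gseq q)).card :=
              Finset.card_le_card hsubset
          _ ≤ (Finset.range (q * (Nat.log 2 n + 1))).card := Finset.card_image_le
          _ = q * (Nat.log 2 n + 1) := Finset.card_range _
    set D : ℝ := (NJ : ℝ) + DG with hDdef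
    have hD0 : 0 ≤ D := by positivity
    have hden2 : ∀ n : ℕ,
        (((Finset.Icc 1 n).filter (· ∈ J2)).card : ℝ) ≤ (n:ℝ)/(2*q) + D := by
      intro n
      have hsplit : (Finset.Icc 1 n).filter (· ∈ J2)
          ⊆ ((Finset.Icc 1 n).filter (· ∈ J)) ∪ ((Finset.Icc 1 n).filter (· ∈ Gq)) := by
        intro k hk
        obtain ⟨hk1, hkJ⟩ := Finset.mem_filter.1 hk
        rw [Finset.mem_union]
        rcases hkJ with h | h
        · exact Or.inl (Finset.mem_filter.2 ⟨hk1, h⟩)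
        · exact Or.inr (Finset.mem_filter.2 ⟨hk1, h⟩)
      have hcard : ((Finset.Icc 1 n).filter (· ∈ J2)).card
          ≤ ((Finset.Icc 1 n).filter (· ∈ J)).card + ((Finset.Icc 1 n).filter (· ∈ Gq)).card :=
        le_trans (Finset.card_le_card hsplit) (Finset.card_union_le _ _)
      have hG2 : (((Finset.Icc 1 n).filter (· ∈ Gq)).card : ℝ) ≤ (n:ℝ)/(4*q) + DG := by
        have h1 : (((Finset.Icc 1 n).filter (· ∈ Gq)).card : ℝ) ≤ ((q * (Nat.log 2 n + 1) : ℕ):ℝ) := by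
          exact_mod_cast hGcnt n
        have h2 := hDG n
        have h3 : ((q * (Nat.log 2 n + 1) : ℕ):ℝ) = (q : ℝ) * ((Nat.log 2 n : ℝ) + 1) := by
          push_cast
          ring
        rw [h3] at h1
        have h4 : ((q:ℝ) * (Nat.log 2 n + 1) : ℝ) = (q : ℝ) * ((Nat.log 2 n : ℝ) + 1) := by push_cast; ring
        rw [h4] at h2
        linarith
      have hcast : (((Finset.Icc 1 n).filter (· ∈ J2)).card : ℝ)
          ≤ (((Finset.Icc 1 n).filter (· ∈ J)).card : ℝ)
            + (((Finset.Icc 1 n).filter (· ∈ Gq)).card : ℝ) := by exact_mod_cast hcard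
      have hring : (n:ℝ)/(4*q) + (n:ℝ)/(4*q) = (n:ℝ)/(2*q) := by ring
      have hJn := hNJ n
      rw [hDdef]
      linarith
    -- free positions are infinite
    have hinf : (setOf (pfree J2)).Infinite := by
      by_contra hfin
      rw [Set.not_infinite] at hfin
      obtain ⟨N₀, hN₀⟩ := hfin.bddAbove
      obtain ⟨n, hn⟩ := exists_nat_gt (2*((N₀:ℝ) + D) + 2 + N₀)
      have hnN : N₀ ≤ n := by
        have : (N₀:ℝ) ≤ 2*((N₀:ℝ) + D) + 2 + N₀ := by linarith
        exact_mod_cast le_of_lt (lt_of_le_of_lt this hn)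
      have hsub2 : Finset.Icc (N₀+1) n ⊆ (Finset.Icc 1 n).filter (· ∈ J2) := by
        intro k hk
        obtain ⟨hk1, hk2⟩ := Finset.mem_Icc.1 hk
        refine Finset.mem_filter.2 ⟨Finset.mem_Icc.2 ⟨by omega, hk2⟩, ?_⟩
        by_contra hkJ
        have hmem : k ∈ setOf (pfree J2) := ⟨by omega, hkJ⟩
        have := hN₀ hmem
        omega
      have hcard2 : n - N₀ ≤ ((Finset.Icc 1 n).filter (· ∈ J2)).card := by
        calc n - N₀ = (Finset.Icc (N₀+1) n).card := by rw [Nat.card_Icc]; omega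
          _ ≤ _ := Finset.card_le_card hsub2
      have hreal : (n:ℝ) - N₀ ≤ (((Finset.Icc 1 n).filter (· ∈ J2)).card : ℝ) := by
        have h1 : ((n - N₀ : ℕ):ℝ) ≤ (((Finset.Icc 1 n).filter (· ∈ J2)).card : ℝ) := by
          exact_mod_cast hcard2
        rwa [Nat.cast_sub hnN] at h1
      have hd2 := hden2 n
      have hhalf : (n:ℝ)/(2*q) ≤ (n:ℝ)/2 := by
        apply div_le_div_of_nonneg_left (by positivity) (by norm_num)
        · exact_mod_cast (by omega : 2 ≤ 2*q)
      linarith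
    -- lower bound from the Hölder argument
    have hden2' : ∀ n : ℕ,
        ((@Finset.filter ℕ (fun k => k ∈ J2) (fun k => Classical.propDecidable _)
          (Finset.Icc 1 n)).card : ℝ) ≤ (n:ℝ)/(2*q) + D := by
      intro n
      have h := hden2 n
      convert h using 4
    have hlow := dim_lower (J' := J2) (b := b) hinf hbBin hJ1 hq1 hD0 hGap hden2'
    have hsubE : {x : ℝ | x ∈ Set.Ioc (0:ℝ) 1 ∧ ∀ k ∈ J2, eps k x = b k}
        ⊆ {x : ℝ | x ∈ Set.Ioc (0 : ℝ) 1 ∧ ∀ k ∈ J, eps k x = a k} := by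
      intro x hx
      refine ⟨hx.1, fun k hk => ?_⟩
      have h1 := hx.2 k (Or.inl hk)
      simp only [hbdef] at h1
      rwa [if_pos hk] at h1
    have hcrr : c ≤ (2*(q:ℝ)-1)/(2*(q:ℝ)+2) := by
      have hq2 : (0:ℝ) < 2*(q:ℝ)+2 := by positivity
      rw [le_div_iff₀ hq2]
      rw [div_lt_iff₀ (by linarith : (0:ℝ) < 2*(1-c))] at hq
      nlinarith
    calc (cc : ℝ≥0∞) = ENNReal.ofReal c := (ENNReal.ofReal_coe_nnreal).symm
      _ ≤ ENNReal.ofReal ((2*(q:ℝ)-1)/(2*(q:ℝ)+2)) := ENNReal.ofReal_le_ofReal hcrr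
      _ ≤ dimH {x : ℝ | x ∈ Set.Ioc (0:ℝ) 1 ∧ ∀ k ∈ J2, eps k x = b k} := hlow
      _ ≤ dimH {x : ℝ | x ∈ Set.Ioc (0 : ℝ) 1 ∧ ∀ k ∈ J, eps k x = a k} := dimH_mono hsubE
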